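/- Let F2 be a finite subset of ℤ² with non-zero row sums r_1 ≥ r_2 ≥ … ≥ r_m (in rows 1,…,m, all other row sums zero) and non-zero column sums c_1 ≥ c_2 ≥ … ≥ c_n (in columns 1,…,n, all other column sums zero). Put a_j = #{i : r_i ≥ j} for 1 ≤ j ≤ n and b_i = #{j : c_j ≥ i} for 1 ≤ i ≤ m. Define α_0 = min{α(F2, F) : F finite ⊆ ℤ², F uniquely determined by its line sums}. Let F1 be a finite subset of ℤ² uniquely determined by its line sums, with row sums u_1 ≥ u_2 ≥ … (in rows 1, 2, …, zero elsewhere) and column sums v_1 ≥ v_2 ≥ … (in columns 1, 2, …, zero elsewhere). Then the following are equivalent: (i) α(F2, F1) = α_0; (ii) for all j ≥ 1, min(a_j, c_j) ≤ v_j ≤ max(a_j, c_j) if 1 ≤ j ≤ n, and v_j = 0 if j > n; (iii) for all i ≥ 1, min(b_i, r_i) ≤ u_i ≤ max(b_i, r_i) if 1 ≤ i ≤ m, and u_i = 0 if i > m. -/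

import Mathlib

open Finset

/-- The row sum `r_i(F)`: the number of elements of `F` in row `i`. -/
def rowSum (F : Finset (ℤ × ℤ)) (i : ℤ) : ℤ :=
  ((F.filter fun p => p.1 = i).card : ℤ)

/-- The column sum `c_j(F)`: the number of elements of `F` in column `j`. -/
def colSum (F : Finset (ℤ × ℤ)) (j : ℤ) : ℤ :=
  ((F.filter fun p => p.2 = j).card : ℤ)

/-- `F` is uniquely determined by its line sums. -/
def uniquelyDetermined (F : Finset (ℤ × ℤ)) : Prop :=
  ∀ F' : Finset (ℤ × ℤ),
    (∀ i, rowSum F' i = rowSum F i) → (∀ j, colSum F' j = colSum F j) → F' = F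

/-- `Σ_j |c_j(F1) − c_j(F2)| + Σ_i |r_i(F1) − r_i(F2)|`; the sums over all of `ℤ`
reduce to the finite index sets below, since all other terms vanish. -/
def lineDiff (F1 F2 : Finset (ℤ × ℤ)) : ℤ :=
  (∑ j ∈ (F1 ∪ F2).image Prod.snd, |colSum F1 j - colSum F2 j|)
    + ∑ i ∈ (F1 ∪ F2).image Prod.fst, |rowSum F1 i - rowSum F2 i|

/-- `α(F1, F2)`. -/
noncomputable def alpha (F1 F2 : Finset (ℤ × ℤ)) : ℝ :=
  (lineDiff F1 F2 : ℝ) / 2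

section Aux


variable {α : Type*} [DecidableEq α]

/-- symmetric difference of finsets -/
def sd (A B : Finset α) : Finset α := (A \ B) ∪ (B \ A)

lemma mem_sd {A B : Finset α} {x : α} : x ∈ sd A B ↔ (x ∈ A ∧ x ∉ B) ∨ (x ∈ B ∧ x ∉ A) := by
  simp [sd, mem_union, mem_sdiff]

lemma sd_comm (A B : Finset α) : sd A B = sd B A := by
  simp [sd, union_comm]

lemma card_sd (A B : Finset α) : (sd A B).card = (A \ B).card + (B \ A).card := by
  refine card_union_of_disjoint ?_
  simp [disjoint_left, mem_sdiff]; tauto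

lemma abs_card_sub_le_card_sd (A B : Finset α) :
    |(A.card : ℤ) - B.card| ≤ ((sd A B).card : ℤ) := by
  have h1 := Finset.card_sdiff_add_card_inter A B
  have h2 := Finset.card_sdiff_add_card_inter B A
  rw [Finset.inter_comm B A] at h2
  rw [card_sd]
  rw [abs_le]
  omega

lemma sandwich_le (S A C : Finset α) :
    ((sd A C).card : ℤ) ≤ (sd S A).card + (sd S C).card := by
  have hsub : sd A C ⊆ sd S A ∪ sd S C := by
    intro x hx
    rw [mem_sd] at hx
    rw [mem_union, mem_sd, mem_sd]
    by_cases hS : x ∈ S <;> tauto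
  have := card_le_card hsub
  have := card_union_le (sd S A) (sd S C)
  omega

lemma sandwich_eq_iff (S A C : Finset α) :
    ((sd S A).card + (sd S C).card = (sd A C).card) ↔ (A ∩ C ⊆ S ∧ S ⊆ A ∪ C) := by
  constructor
  · intro h
    constructor
    · intro x hx
      by_contra hxS
      rw [mem_inter] at hx
      have hxin : x ∈ sd S A ∩ sd S C := by
        rw [mem_inter, mem_sd, mem_sd]; tauto
      have hxout : x ∉ sd A C := by rw [mem_sd]; tauto
      have hsub : sd A C ⊆ sd S A ∪ sd S C := by
        intro y hy
        rw [mem_sd] at hy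
        rw [mem_union, mem_sd, mem_sd]
        by_cases hS : y ∈ S <;> tauto
      have h1 : (sd A C).card + 1 ≤ (sd S A ∪ sd S C).card := by
        have : insert x (sd A C) ⊆ sd S A ∪ sd S C := by
          intro y hy
          rcases mem_insert.mp hy with rfl | hy
          · rw [mem_union]; exact Or.inl (mem_of_mem_inter_left hxin)
          · exact hsub hy
        have := card_le_card this
        rwa [card_insert_of_notMem hxout] at this
      have h2 : (sd S A ∪ sd S C).card + (sd S A ∩ sd S C).card
          = (sd S A).card + (sd S C).card := card_union_add_card_inter _ _
      have h3 : 1 ≤ (sd S A ∩ sd S C).card := card_pos.mpr ⟨x, hxin⟩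
      omega
    · intro x hxS
      by_contra hxAC
      rw [mem_union] at hxAC
      push_neg at hxAC
      have hxin : x ∈ sd S A ∩ sd S C := by
        rw [mem_inter, mem_sd, mem_sd]; tauto
      have hxout : x ∉ sd A C := by rw [mem_sd]; tauto
      have hsub : sd A C ⊆ sd S A ∪ sd S C := by
        intro y hy
        rw [mem_sd] at hy
        rw [mem_union, mem_sd, mem_sd]
        by_cases hS : y ∈ S <;> tauto
      have h1 : (sd A C).card + 1 ≤ (sd S A ∪ sd S C).card := by
        have : insert x (sd A C) ⊆ sd S A ∪ sd S C := by
          intro y hy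
          rcases mem_insert.mp hy with rfl | hy
          · rw [mem_union]; exact Or.inl (mem_of_mem_inter_left hxin)
          · exact hsub hy
        have := card_le_card this
        rwa [card_insert_of_notMem hxout] at this
      have h2 : (sd S A ∪ sd S C).card + (sd S A ∩ sd S C).card
          = (sd S A).card + (sd S C).card := card_union_add_card_inter _ _
      have h3 : 1 ≤ (sd S A ∩ sd S C).card := card_pos.mpr ⟨x, hxin⟩
      omega
  · rintro ⟨h1, h2⟩
    have hd : Disjoint (sd S A) (sd S C) := by
      rw [disjoint_left]
      intro x hx1 hx2
      rw [mem_sd] at hx1 hx2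
      rcases hx1 with ⟨hxS, hxA⟩ | ⟨hxA, hxS⟩
      · rcases hx2 with ⟨_, hxC⟩ | ⟨hxC, hxS'⟩
        · exact absurd (h2 hxS) (by rw [mem_union]; tauto)
        · exact hxS' hxS
      · rcases hx2 with ⟨hxS', _⟩ | ⟨hxC, _⟩
        · exact hxS hxS'
        · exact hxS (h1 (mem_inter.mpr ⟨hxA, hxC⟩))
    have hu : sd S A ∪ sd S C = sd A C := by
      ext x
      have h1a : x ∈ A → x ∈ C → x ∈ S := fun ha hc => h1 (mem_inter.mpr ⟨ha, hc⟩)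
      have h2a : x ∈ S → x ∈ A ∨ x ∈ C := fun hs => mem_union.mp (h2 hs)
      rw [mem_union, mem_sd, mem_sd, mem_sd]
      tauto
    rw [← card_union_of_disjoint hd, hu]

/-- transpose of a finite set of cells -/
def tp (F : Finset (ℤ × ℤ)) : Finset (ℤ × ℤ) := F.image Prod.swap

lemma mem_tp {F : Finset (ℤ × ℤ)} {p : ℤ × ℤ} : p ∈ tp F ↔ (p.2, p.1) ∈ F := by
  constructor
  · intro h
    obtain ⟨q, hq, rfl⟩ := mem_image.mp h
    simpa using hq
  · intro h
    exact mem_image.mpr ⟨(p.2, p.1), h, rfl⟩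

lemma tp_tp (F : Finset (ℤ × ℤ)) : tp (tp F) = F := by
  ext p; simp [mem_tp]

lemma card_tp (F : Finset (ℤ × ℤ)) : (tp F).card = F.card :=
  card_image_of_injective _ Prod.swap_injective

lemma tp_subset {A B : Finset (ℤ × ℤ)} : tp A ⊆ tp B ↔ A ⊆ B := by
  constructor
  · intro h p hp
    have : (p.2, p.1) ∈ tp A := mem_tp.mpr (by simpa using hp)
    have := h this
    simpa using mem_tp.mp this
  · intro h p hp
    exact mem_tp.mpr (h (mem_tp.mp hp))

lemma tp_inter (A B : Finset (ℤ × ℤ)) : tp (A ∩ B) = tp A ∩ tp B := by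
  ext p; simp [mem_tp]

lemma tp_union (A B : Finset (ℤ × ℤ)) : tp (A ∪ B) = tp A ∪ tp B := by
  ext p; simp [mem_tp]

lemma tp_sd (A B : Finset (ℤ × ℤ)) : tp (sd A B) = sd (tp A) (tp B) := by
  ext p; simp [mem_tp, mem_sd]

lemma card_sd_tp (A B : Finset (ℤ × ℤ)) :
    (sd (tp A) (tp B)).card = (sd A B).card := by
  rw [← tp_sd, card_tp]

lemma rowSum_nonneg (F : Finset (ℤ × ℤ)) (i : ℤ) : 0 ≤ rowSum F i := Int.natCast_nonneg _
lemma colSum_nonneg (F : Finset (ℤ × ℤ)) (j : ℤ) : 0 ≤ colSum F j := Int.natCast_nonneg _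

lemma colSum_tp (F : Finset (ℤ × ℤ)) (j : ℤ) : colSum (tp F) j = rowSum F j := by
  unfold colSum rowSum tp
  congr 1
  rw [Finset.filter_image]
  rw [Finset.card_image_of_injective _ Prod.swap_injective]
  congr 1

lemma rowSum_tp (F : Finset (ℤ × ℤ)) (i : ℤ) : rowSum (tp F) i = colSum F i := by
  rw [← colSum_tp (tp F), tp_tp]

lemma colSum_pos_iff {F : Finset (ℤ × ℤ)} {j : ℤ} : 1 ≤ colSum F j ↔ ∃ i, (i, j) ∈ F := by
  unfold colSum
  rw [show (1:ℤ) ≤ ((F.filter fun p => p.2 = j).card : ℤ) ↔ 0 < (F.filter fun p => p.2 = j).card by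
    exact_mod_cast Iff.rfl]
  rw [card_pos]
  constructor
  · rintro ⟨p, hp⟩
    rw [mem_filter] at hp
    exact ⟨p.1, by rw [show (p.1, j) = p by ext <;> simp [hp.2]]; exact hp.1⟩
  · rintro ⟨i, hi⟩
    exact ⟨(i, j), mem_filter.mpr ⟨hi, rfl⟩⟩

lemma rowSum_pos_iff {F : Finset (ℤ × ℤ)} {i : ℤ} : 1 ≤ rowSum F i ↔ ∃ j, (i, j) ∈ F := by
  rw [← colSum_tp]
  rw [colSum_pos_iff]
  constructor <;> rintro ⟨x, hx⟩ <;> exact ⟨x, by simpa [mem_tp] using hx⟩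

/-- the "column diagram" of F : cell (j,t) for 1 ≤ t ≤ colSum F j -/
noncomputable def Dc (F : Finset (ℤ × ℤ)) : Finset (ℤ × ℤ) :=
  (F.image Prod.snd).biUnion (fun j => ({j} : Finset ℤ) ×ˢ Finset.Icc (1:ℤ) (colSum F j))

lemma mem_Dc {F : Finset (ℤ × ℤ)} {p : ℤ × ℤ} :
    p ∈ Dc F ↔ 1 ≤ p.2 ∧ p.2 ≤ colSum F p.1 := by
  unfold Dc
  rw [mem_biUnion]
  constructor
  · rintro ⟨j, hj, hp⟩
    rw [mem_product, mem_singleton] at hp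
    obtain ⟨rfl, hp2⟩ := hp
    exact ⟨(mem_Icc.mp hp2).1, (mem_Icc.mp hp2).2⟩
  · rintro ⟨h1, h2⟩
    have : ∃ i, (i, p.1) ∈ F := colSum_pos_iff.mp (le_trans h1 h2)
    obtain ⟨i, hi⟩ := this
    exact ⟨p.1, mem_image.mpr ⟨(i, p.1), hi, rfl⟩,
      mem_product.mpr ⟨mem_singleton.mpr rfl, mem_Icc.mpr ⟨h1, h2⟩⟩⟩

noncomputable def Dr (F : Finset (ℤ × ℤ)) : Finset (ℤ × ℤ) := Dc (tp F)

lemma mem_Dr {F : Finset (ℤ × ℤ)} {p : ℤ × ℤ} :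
    p ∈ Dr F ↔ 1 ≤ p.2 ∧ p.2 ≤ rowSum F p.1 := by
  rw [Dr, mem_Dc, colSum_tp]

-- SECTION 3: Icc facts, fibers, lineDiff_eq
lemma downclosed_eq_Icc (S : Finset ℤ) (h1 : ∀ x ∈ S, 1 ≤ x)
    (h2 : ∀ x ∈ S, ∀ y : ℤ, 1 ≤ y → y ≤ x → y ∈ S) :
    S = Finset.Icc 1 (S.card : ℤ) := by
  rcases S.eq_empty_or_nonempty with rfl | hS
  · simp
  · obtain ⟨M, hM, hMle⟩ : ∃ M ∈ S, ∀ x ∈ S, x ≤ M :=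
      ⟨S.max' hS, S.max'_mem hS, fun x hx => S.le_max' x hx⟩
    have hSM : S = Finset.Icc 1 M := by
      apply Finset.Subset.antisymm
      · intro x hx
        exact Finset.mem_Icc.mpr ⟨h1 x hx, hMle x hx⟩
      · intro x hx
        rw [Finset.mem_Icc] at hx
        exact h2 _ hM x hx.1 hx.2
    have hM1 := h1 _ hM
    rw [hSM, Int.card_Icc]
    congr 1
    omega

lemma card_sd_Icc (x y : ℤ) (hx : 0 ≤ x) (hy : 0 ≤ y) :
    ((sd (Finset.Icc (1:ℤ) x) (Finset.Icc (1:ℤ) y)).card : ℤ) = |x - y| := by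
  have hd1 : Finset.Icc (1:ℤ) x \ Finset.Icc 1 y = Finset.Icc (y+1) x := by
    ext z; simp only [mem_sdiff, Finset.mem_Icc]; omega
  have hd2 : Finset.Icc (1:ℤ) y \ Finset.Icc 1 x = Finset.Icc (x+1) y := by
    ext z; simp only [mem_sdiff, Finset.mem_Icc]; omega
  rw [card_sd, hd1, hd2, Int.card_Icc, Int.card_Icc]
  push_cast
  rcases le_total y x with h | h
  · rw [abs_of_nonneg (by omega)]; omega
  · rw [abs_of_nonpos (by omega)]; omega

lemma filter_sd {α : Type*} [DecidableEq α] (p : α → Prop) [DecidablePred p]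
    (A B : Finset α) : (sd A B).filter p = sd (A.filter p) (B.filter p) := by
  ext x; simp only [mem_sd, mem_filter]; tauto

lemma sd_product_singleton (ji : ℤ) (A B : Finset ℤ)
    (f : ℤ → ℤ × ℤ) (hf : ∀ t, f t = (ji, t)) :
    sd (({ji} : Finset ℤ) ×ˢ A) (({ji} : Finset ℤ) ×ˢ B)
      = ({ji} : Finset ℤ) ×ˢ sd A B := by
  ext p
  simp only [mem_sd, Finset.mem_product, Finset.mem_singleton]
  tauto

lemma filter_Dc_eq (F : Finset (ℤ × ℤ)) (j : ℤ) :
    (Dc F).filter (fun p => p.1 = j) = ({j} : Finset ℤ) ×ˢ Finset.Icc (1:ℤ) (colSum F j) := by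
  ext ⟨x, t⟩
  simp only [Finset.mem_filter, mem_Dc, Finset.mem_product, Finset.mem_singleton, Finset.mem_Icc]
  constructor
  · rintro ⟨⟨h1, h2⟩, rfl⟩
    exact ⟨rfl, h1, h2⟩
  · rintro ⟨rfl, h1, h2⟩
    exact ⟨⟨h1, h2⟩, rfl⟩

lemma sum_abs_col (X Y : Finset (ℤ × ℤ)) :
    ∑ j ∈ (X ∪ Y).image Prod.snd, |colSum X j - colSum Y j|
      = ((sd (Dc X) (Dc Y)).card : ℤ) := by
  have hcov : ∀ p ∈ sd (Dc X) (Dc Y), p.1 ∈ (X ∪ Y).image Prod.snd := by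
    intro p hp
    rw [mem_sd] at hp
    have : (1 ≤ p.2 ∧ p.2 ≤ colSum X p.1) ∨ (1 ≤ p.2 ∧ p.2 ≤ colSum Y p.1) := by
      rcases hp with ⟨h, _⟩ | ⟨h, _⟩
      · exact Or.inl (mem_Dc.mp h)
      · exact Or.inr (mem_Dc.mp h)
    rcases this with ⟨h1, h2⟩ | ⟨h1, h2⟩
    · obtain ⟨i, hi⟩ := colSum_pos_iff.mp (le_trans h1 h2)
      exact Finset.mem_image.mpr ⟨(i, p.1), Finset.mem_union_left _ hi, rfl⟩
    · obtain ⟨i, hi⟩ := colSum_pos_iff.mp (le_trans h1 h2)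
      exact Finset.mem_image.mpr ⟨(i, p.1), Finset.mem_union_right _ hi, rfl⟩
  rw [Finset.card_eq_sum_card_fiberwise hcov]
  push_cast
  apply Finset.sum_congr rfl
  intro j _
  rw [filter_sd, filter_Dc_eq, filter_Dc_eq, sd_product_singleton j _ _ (fun t => (j, t)) (fun t => rfl)]
  rw [Finset.card_product, Finset.card_singleton, one_mul]
  rw [← card_sd_Icc _ _ (colSum_nonneg X j) (colSum_nonneg Y j)]

lemma image_snd_tp (W : Finset (ℤ × ℤ)) :
    (tp W).image Prod.snd = W.image Prod.fst := by
  unfold tp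
  rw [Finset.image_image]
  rfl

lemma lineDiff_eq (X Y : Finset (ℤ × ℤ)) :
    lineDiff X Y = ((sd (Dc X) (Dc Y)).card : ℤ) + ((sd (Dr X) (Dr Y)).card : ℤ) := by
  unfold lineDiff
  rw [sum_abs_col]
  congr 1
  have himg : (X ∪ Y).image Prod.fst = (tp X ∪ tp Y).image Prod.snd := by
    rw [← tp_union, image_snd_tp]
  rw [himg]
  have : ∀ i ∈ (tp X ∪ tp Y).image Prod.snd,
      |rowSum X i - rowSum Y i| = |colSum (tp X) i - colSum (tp Y) i| := by
    intro i _
    rw [colSum_tp, colSum_tp]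
  rw [Finset.sum_congr rfl this, sum_abs_col]
  rfl

-- SECTION 4: staircases
def IsStair (F : Finset (ℤ × ℤ)) : Prop :=
  (∀ p ∈ F, 1 ≤ p.1 ∧ 1 ≤ p.2) ∧
    (∀ p ∈ F, ∀ i j : ℤ, 1 ≤ i → i ≤ p.1 → 1 ≤ j → j ≤ p.2 → (i, j) ∈ F)

lemma IsStair.inter {A B : Finset (ℤ × ℤ)} (hA : IsStair A) (hB : IsStair B) :
    IsStair (A ∩ B) := by
  constructor
  · intro p hp
    exact hA.1 p (Finset.mem_of_mem_inter_left hp)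
  · intro p hp i j h1 h2 h3 h4
    rw [Finset.mem_inter] at hp ⊢
    exact ⟨hA.2 p hp.1 i j h1 h2 h3 h4, hB.2 p hp.2 i j h1 h2 h3 h4⟩

lemma IsStair.union {A B : Finset (ℤ × ℤ)} (hA : IsStair A) (hB : IsStair B) :
    IsStair (A ∪ B) := by
  constructor
  · intro p hp
    rcases Finset.mem_union.mp hp with h | h
    · exact hA.1 p h
    · exact hB.1 p h
  · intro p hp i j h1 h2 h3 h4
    rcases Finset.mem_union.mp hp with h | h
    · exact Finset.mem_union_left _ (hA.2 p h i j h1 h2 h3 h4)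
    · exact Finset.mem_union_right _ (hB.2 p h i j h1 h2 h3 h4)

lemma IsStair.tp {A : Finset (ℤ × ℤ)} (hA : IsStair A) : IsStair (tp A) := by
  constructor
  · intro p hp
    have := hA.1 _ (mem_tp.mp hp)
    exact ⟨this.2, this.1⟩
  · intro p hp i j h1 h2 h3 h4
    exact mem_tp.mpr (hA.2 _ (mem_tp.mp hp) j i h3 h4 h1 h2)

/-- the set of row indices of elements in column j -/
def colset (F : Finset (ℤ × ℤ)) (j : ℤ) : Finset ℤ :=
  (F.filter fun p => p.2 = j).image Prod.fst

lemma mem_colset {F : Finset (ℤ × ℤ)} {i j : ℤ} : i ∈ colset F j ↔ (i, j) ∈ F := by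
  unfold colset
  rw [Finset.mem_image]
  constructor
  · rintro ⟨p, hp, rfl⟩
    rw [Finset.mem_filter] at hp
    rw [show (p.1, j) = p by ext <;> simp [hp.2]]
    exact hp.1
  · intro h
    exact ⟨(i, j), Finset.mem_filter.mpr ⟨h, rfl⟩, rfl⟩

lemma card_colset (F : Finset (ℤ × ℤ)) (j : ℤ) : ((colset F j).card : ℤ) = colSum F j := by
  unfold colset colSum
  congr 1
  apply Finset.card_image_of_injOn
  intro p hp q hq hpq
  rw [Finset.mem_coe, Finset.mem_filter] at hp hq
  ext
  · exact hpq
  · rw [hp.2, hq.2]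

/-- membership characterization for staircases, column version -/
lemma stair_mem_iff_col {F : Finset (ℤ × ℤ)} (hF : IsStair F) (i j : ℤ) :
    (i, j) ∈ F ↔ 1 ≤ j ∧ 1 ≤ i ∧ i ≤ colSum F j := by
  have hdc : colset F j = Finset.Icc 1 ((colset F j).card : ℤ) := by
    apply downclosed_eq_Icc
    · intro x hx
      exact (hF.1 _ (mem_colset.mp hx)).1
    · intro x hx y hy1 hy2
      rw [mem_colset] at hx ⊢
      have hj := (hF.1 _ hx).2
      exact hF.2 _ hx y j hy1 hy2 hj le_rfl
  constructor
  · intro h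
    refine ⟨(hF.1 _ h).2, ?_, ?_⟩
    · exact (hF.1 _ h).1
    · have : i ∈ colset F j := mem_colset.mpr h
      rw [hdc, Finset.mem_Icc] at this
      rw [← card_colset]
      exact this.2
  · rintro ⟨hj, hi1, hi2⟩
    rw [← mem_colset, hdc, Finset.mem_Icc, card_colset]
    exact ⟨hi1, hi2⟩

lemma stair_mem_iff_row {F : Finset (ℤ × ℤ)} (hF : IsStair F) (i j : ℤ) :
    (i, j) ∈ F ↔ 1 ≤ i ∧ 1 ≤ j ∧ j ≤ rowSum F i := by
  have := stair_mem_iff_col hF.tp j i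
  rw [mem_tp] at this
  simp only [colSum_tp] at this
  rw [this]

lemma stair_Dr {F : Finset (ℤ × ℤ)} (hF : IsStair F) : Dr F = F := by
  ext ⟨i, t⟩
  rw [mem_Dr, stair_mem_iff_row hF]
  constructor
  · rintro ⟨h1, h2⟩
    refine ⟨?_, h1, h2⟩
    obtain ⟨j, hj⟩ := rowSum_pos_iff.mp (le_trans h1 h2)
    exact (hF.1 _ hj).1
  · tauto

lemma stair_Dc {F : Finset (ℤ × ℤ)} (hF : IsStair F) : Dc F = tp F := by
  have := stair_Dr hF.tp
  rw [Dr] at this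
  rw [tp_tp] at this
  rw [this]

-- SECTION 5: staircase implies uniquely determined
def shiftUp (W : Finset (ℤ × ℤ)) : Finset (ℤ × ℤ) :=
  (W.filter fun p => p.1 ≠ 1).image (fun p => (p.1 - 1, p.2))

lemma shift_inj : Function.Injective (fun p : ℤ × ℤ => (p.1 - 1, p.2)) := by
  intro a b h
  rw [Prod.ext_iff] at h ⊢
  simp only at h
  omega

lemma mem_shiftUp {W : Finset (ℤ × ℤ)} {p : ℤ × ℤ} :
    p ∈ shiftUp W ↔ (p.1 + 1, p.2) ∈ W ∧ p.1 + 1 ≠ 1 := by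
  unfold shiftUp
  rw [Finset.mem_image]
  constructor
  · rintro ⟨q, hq, rfl⟩
    rw [Finset.mem_filter] at hq
    constructor
    · rw [show (q.1 - 1 + 1, q.2) = q by ext <;> simp <;> omega]
      exact hq.1
    · simp only
      omega
  · rintro ⟨h1, h2⟩
    refine ⟨(p.1 + 1, p.2), Finset.mem_filter.mpr ⟨h1, by simpa using h2⟩, by ext <;> simp⟩

lemma rowSum_shiftUp (W : Finset (ℤ × ℤ)) (i : ℤ) (hi : i ≠ 0) :
    rowSum (shiftUp W) i = rowSum W (i + 1) := by
  unfold rowSum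
  congr 1
  apply Finset.card_bij (fun p _ => ((p.1 + 1 : ℤ), p.2))
  · intro p hp
    rw [Finset.mem_filter] at hp
    have := mem_shiftUp.mp hp.1
    rw [Finset.mem_filter]
    exact ⟨this.1, by simp [hp.2]⟩
  · intro p hp q hq h
    rw [Prod.ext_iff] at h ⊢
    simp only at h
    omega
  · intro q hq
    rw [Finset.mem_filter] at hq
    refine ⟨(q.1 - 1, q.2), Finset.mem_filter.mpr ⟨mem_shiftUp.mpr ?_, by simp; omega⟩, by ext <;> simp⟩
    constructor
    · rw [show (q.1 - 1 + 1, q.2) = q by ext <;> simp <;> omega]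
      exact hq.1
    · simp only
      omega

lemma rowSum_shiftUp_zero (W : Finset (ℤ × ℤ)) : rowSum (shiftUp W) 0 = 0 := by
  unfold rowSum
  rw [show ((shiftUp W).filter fun p => p.1 = 0) = ∅ from ?_]
  · simp
  · rw [Finset.eq_empty_iff_forall_notMem]
    intro p hp
    rw [Finset.mem_filter] at hp
    have := mem_shiftUp.mp hp.1
    omega

lemma colSum_shiftUp (W : Finset (ℤ × ℤ)) (j : ℤ) :
    colSum (shiftUp W) j = colSum W j - (if (1, j) ∈ W then 1 else 0) := by
  have h1 : colSum (shiftUp W) j = colSum (W.filter fun p => p.1 ≠ 1) j := by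
    unfold colSum shiftUp
    congr 1
    rw [Finset.filter_image]
    rw [Finset.card_image_of_injective _ shift_inj]
  have h2 : colSum (W.filter fun p => p.1 ≠ 1) j + colSum (W.filter fun p => p.1 = 1) j
      = colSum W j := by
    unfold colSum
    rw [← Nat.cast_add]
    congr 1
    have e1 : (W.filter fun p => p.1 ≠ 1).filter (fun p => p.2 = j)
        = (W.filter fun p => p.2 = j).filter (fun p => ¬ p.1 = 1) := by
      ext p; simp only [Finset.mem_filter]; tauto
    have e2 : (W.filter fun p => p.1 = 1).filter (fun p => p.2 = j)
        = (W.filter fun p => p.2 = j).filter (fun p => p.1 = 1) := by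
      ext p; simp only [Finset.mem_filter]; tauto
    rw [e1, e2, add_comm]
    exact Finset.card_filter_add_card_filter_not (p := fun p : ℤ × ℤ => p.1 = 1)
  have h3 : colSum (W.filter fun p => p.1 = 1) j = if (1, j) ∈ W then 1 else 0 := by
    unfold colSum
    have : (W.filter fun p => p.1 = 1).filter (fun p => p.2 = j)
        = if (1, j) ∈ W then {((1:ℤ), j)} else ∅ := by
      split_ifs with h
      · ext p
        rw [Finset.mem_filter, Finset.mem_filter, Finset.mem_singleton]
        constructor
        · rintro ⟨⟨hp, h1⟩, h2⟩
          ext <;> simp [h1, h2]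
        · rintro rfl
          exact ⟨⟨h, rfl⟩, rfl⟩
      · rw [Finset.eq_empty_iff_forall_notMem]
        intro p hp
        rw [Finset.mem_filter, Finset.mem_filter] at hp
        apply h
        rw [show ((1:ℤ), j) = p by ext <;> simp [hp.1.2, hp.2]]
        exact hp.1.1
    rw [this]
    split_ifs <;> simp
  omega

lemma eq_empty_of_rowSums_zero {F' : Finset (ℤ × ℤ)} (h : ∀ i, rowSum F' i = 0) : F' = ∅ := by
  rw [Finset.eq_empty_iff_forall_notMem]
  intro p hp
  have : 1 ≤ rowSum F' p.1 := rowSum_pos_iff.mpr ⟨p.2, by rw [show (p.1, p.2) = p by ext <;> simp]; exact hp⟩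
  rw [h] at this
  omega

lemma stair_shiftUp {F : Finset (ℤ × ℤ)} (hF : IsStair F) : IsStair (shiftUp F) := by
  constructor
  · intro p hp
    have h := mem_shiftUp.mp hp
    have := hF.1 _ h.1
    simp only at this ⊢
    omega
  · intro p hp i j h1 h2 h3 h4
    have h := mem_shiftUp.mp hp
    rw [mem_shiftUp]
    have hq := hF.1 _ h.1
    simp only at hq
    constructor
    · exact hF.2 _ h.1 (i+1) j (by omega) (by simp; omega) h3 (by simpa using h4)
    · omega

lemma stair_unique : ∀ (N : ℕ) (F : Finset (ℤ × ℤ)), F.card = N → IsStair F →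
    uniquelyDetermined F := by
  intro N
  induction N using Nat.strong_induction_on with
  | _ N IH =>
    intro F hcard hF F' hrow hcol
    rcases F.eq_empty_or_nonempty with rfl | hne
    · apply eq_empty_of_rowSums_zero
      intro i
      rw [hrow i]
      unfold rowSum
      simp
    -- F is nonempty
    · have h11 : (1, 1) ∈ F := by
        obtain ⟨p, hp⟩ := hne
        have := hF.1 p hp
        exact hF.2 p hp 1 1 le_rfl this.1 le_rfl this.2
      set u1 : ℤ := rowSum F 1 with hu1
      have hu1pos : 1 ≤ u1 := rowSum_pos_iff.mpr ⟨1, h11⟩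
      have hrow1F : F.filter (fun p => p.1 = 1) = ({(1:ℤ)} : Finset ℤ) ×ˢ Finset.Icc 1 u1 := by
        ext ⟨i, j⟩
        rw [Finset.mem_filter, Finset.mem_product, Finset.mem_singleton, Finset.mem_Icc]
        constructor
        · rintro ⟨hp, rfl⟩
          have := (stair_mem_iff_row hF 1 j).mp hp
          exact ⟨rfl, this.2.1, this.2.2⟩
        · rintro ⟨rfl, h1, h2⟩
          exact ⟨(stair_mem_iff_row hF 1 j).mpr ⟨le_rfl, h1, h2⟩, rfl⟩
      have hcardrow : (({(1:ℤ)} : Finset ℤ) ×ˢ Finset.Icc 1 u1).card = u1.toNat := by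
        rw [Finset.card_product, Finset.card_singleton, Int.card_Icc, one_mul]
        congr 1
        omega
      have hrow1F' : F'.filter (fun p => p.1 = 1) = ({(1:ℤ)} : Finset ℤ) ×ˢ Finset.Icc 1 u1 := by
        apply Finset.eq_of_subset_of_card_le
        · intro ⟨i, j⟩ hp
          rw [Finset.mem_filter] at hp
          rw [Finset.mem_product, Finset.mem_singleton, Finset.mem_Icc]
          simp only at hp
          refine ⟨hp.2, ?_, ?_⟩
          · have : 1 ≤ colSum F' j := colSum_pos_iff.mpr ⟨i, hp.1⟩
            rw [hcol j] at this
            obtain ⟨i', hi'⟩ := colSum_pos_iff.mp this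
            exact ((stair_mem_iff_col hF i' j).mp hi').1
          · have : 1 ≤ colSum F' j := colSum_pos_iff.mpr ⟨i, hp.1⟩
            rw [hcol j] at this
            obtain ⟨i', hi'⟩ := colSum_pos_iff.mp this
            have h1j : (1, j) ∈ F := by
              have hc := (stair_mem_iff_col hF i' j).mp hi'
              exact hF.2 _ hi' 1 j le_rfl hc.2.1 hc.1 le_rfl
            have := (stair_mem_iff_row hF 1 j).mp h1j
            exact this.2.2
        · rw [hcardrow]
          have : ((F'.filter (fun p => p.1 = 1)).card : ℤ) = u1 := by
            rw [show ((F'.filter (fun p => p.1 = 1)).card : ℤ) = rowSum F' 1 from rfl]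
            rw [hrow 1]
          omega
      -- shifted sets
      have hrowG : ∀ i, rowSum (shiftUp F') i = rowSum (shiftUp F) i := by
        intro i
        rcases eq_or_ne i 0 with rfl | hi
        · rw [rowSum_shiftUp_zero, rowSum_shiftUp_zero]
        · rw [rowSum_shiftUp _ _ hi, rowSum_shiftUp _ _ hi, hrow]
      have hcolG : ∀ j, colSum (shiftUp F') j = colSum (shiftUp F) j := by
        intro j
        rw [colSum_shiftUp, colSum_shiftUp, hcol]
        have : ((1, j) ∈ F') ↔ ((1, j) ∈ F) := by
          constructor
          · intro h
            have : ((1:ℤ), j) ∈ F'.filter (fun p => p.1 = 1) := Finset.mem_filter.mpr ⟨h, rfl⟩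
            rw [hrow1F'] at this
            rw [← hrow1F] at this
            exact (Finset.mem_filter.mp this).1
          · intro h
            have : ((1:ℤ), j) ∈ F.filter (fun p => p.1 = 1) := Finset.mem_filter.mpr ⟨h, rfl⟩
            rw [hrow1F] at this
            rw [← hrow1F'] at this
            exact (Finset.mem_filter.mp this).1
        simp [this]
      have hcardG : (shiftUp F).card < N := by
        unfold shiftUp
        rw [Finset.card_image_of_injective _ shift_inj]
        have hsplit := Finset.card_filter_add_card_filter_not (s := F) (p := fun p => p.1 = 1)
        have : 1 ≤ (F.filter (fun p => p.1 = 1)).card := by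
          rw [hrow1F, hcardrow]
          omega
        simp only [ne_eq] at *
        omega
      have hG := IH _ hcardG (shiftUp F) rfl (stair_shiftUp hF) (shiftUp F') hrowG hcolG
      -- conclude
      have hrest : F'.filter (fun p => p.1 ≠ 1) = F.filter (fun p => p.1 ≠ 1) := by
        have := congrArg (Finset.image (fun p : ℤ × ℤ => (p.1 + 1, p.2))) hG
        unfold shiftUp at this
        rw [Finset.image_image, Finset.image_image] at this
        have heq : ((fun p : ℤ × ℤ => (p.1 + 1, p.2)) ∘ (fun p : ℤ × ℤ => (p.1 - 1, p.2)))
            = id := by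
          funext p
          simp
        rw [heq, Finset.image_id, Finset.image_id] at this
        exact this
      have hsplitF : F = F.filter (fun p => p.1 = 1) ∪ F.filter (fun p => p.1 ≠ 1) :=
        (Finset.filter_union_filter_not_eq _ F).symm
      have hsplitF' : F' = F'.filter (fun p => p.1 = 1) ∪ F'.filter (fun p => p.1 ≠ 1) :=
        (Finset.filter_union_filter_not_eq _ F').symm
      rw [hsplitF, hsplitF', hrow1F, hrow1F', hrest]

-- SECTION 6: switches and conjugacy
def noswitch (F : Finset (ℤ × ℤ)) : Prop :=
  ∀ p ∈ F, ∀ q ∈ F, (p.1, q.2) ∈ F ∨ (q.1, p.2) ∈ F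

lemma unique_noswitch {F : Finset (ℤ × ℤ)} (hF : uniquelyDetermined F) : noswitch F := by
  rintro ⟨pi, pj⟩ hp ⟨qi, qj⟩ hq
  by_contra hcon
  push_neg at hcon
  simp only at hcon
  obtain ⟨h1, h2⟩ := hcon
  have hne1 : pi ≠ qi := fun h => h2 (by rw [← h]; exact hp)
  have hne2 : pj ≠ qj := fun h => h1 (by rw [← h]; exact hp)
  have hpq : ((pi, pj) : ℤ × ℤ) ≠ (qi, qj) := fun h => hne1 (congrArg Prod.fst h)
  have hqp : ((qi, qj) : ℤ × ℤ) ≠ (pi, pj) := Ne.symm hpq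
  classical
  set φ : ℤ × ℤ → ℤ × ℤ :=
    fun z => if z = (pi, pj) then (pi, qj) else if z = (qi, qj) then (qi, pj) else z with hφ
  set τ : ℤ × ℤ → ℤ × ℤ :=
    fun z => if z = (pi, pj) then (qi, qj) else if z = (qi, qj) then (pi, pj) else z with hτ
  have hφp : φ (pi, pj) = (pi, qj) := by rw [hφ]; simp
  have hφq : φ (qi, qj) = (qi, pj) := by rw [hφ]; simp [hqp]
  have hφo : ∀ z, z ≠ (pi, pj) → z ≠ (qi, qj) → φ z = z := by
    intro z e1 e2; rw [hφ]; simp [e1, e2]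
  have hτp : τ (pi, pj) = (qi, qj) := by rw [hτ]; simp
  have hτq : τ (qi, qj) = (pi, pj) := by rw [hτ]; simp [hqp]
  have hτo : ∀ z, z ≠ (pi, pj) → z ≠ (qi, qj) → τ z = z := by
    intro z e1 e2; rw [hτ]; simp [e1, e2]
  have hτinv : ∀ z, τ (τ z) = z := by
    intro z
    by_cases e1 : z = (pi, pj)
    · subst e1; rw [hτp, hτq]
    · by_cases e2 : z = (qi, qj)
      · subst e2; rw [hτq, hτp]
      · rw [hτo z e1 e2, hτo z e1 e2]
  have hτinj : Function.Injective τ := Function.LeftInverse.injective hτinv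
  have hτmaps : ∀ z ∈ F, τ z ∈ F := by
    intro z hz
    by_cases e1 : z = (pi, pj)
    · subst e1; rw [hτp]; exact hq
    · by_cases e2 : z = (qi, qj)
      · subst e2; rw [hτq]; exact hp
      · rw [hτo z e1 e2]; exact hz
  have hτim : F.image τ = F := by
    apply Finset.eq_of_subset_of_card_le
    · intro z hz
      obtain ⟨w, hw, rfl⟩ := Finset.mem_image.mp hz
      exact hτmaps w hw
    · rw [Finset.card_image_of_injective _ hτinj]
  have hφ1 : ∀ z, (φ z).1 = z.1 := by
    intro z
    by_cases e1 : z = (pi, pj)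
    · subst e1; rw [hφp]
    · by_cases e2 : z = (qi, qj)
      · subst e2; rw [hφq]
      · rw [hφo z e1 e2]
  have hφ2 : ∀ z, (φ z).2 = (τ z).2 := by
    intro z
    by_cases e1 : z = (pi, pj)
    · subst e1; rw [hφp, hτp]
    · by_cases e2 : z = (qi, qj)
      · subst e2; rw [hφq, hτq]
      · rw [hφo z e1 e2, hτo z e1 e2]
  have hφinjF : Set.InjOn φ F := by
    intro a ha b hb hab
    rw [Finset.mem_coe] at ha hb
    by_cases e1a : a = (pi, pj)
    · by_cases e1b : b = (pi, pj)
      · rw [e1a, e1b]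
      · by_cases e2b : b = (qi, qj)
        · exfalso
          subst e1a; subst e2b
          rw [hφp, hφq] at hab
          exact hne1 (congrArg Prod.fst hab)
        · exfalso
          subst e1a
          rw [hφp, hφo b e1b e2b] at hab
          apply h1
          rw [hab]
          exact hb
    · by_cases e2a : a = (qi, qj)
      · by_cases e1b : b = (pi, pj)
        · exfalso
          subst e2a; subst e1b
          rw [hφq, hφp] at hab
          exact hne1 (congrArg Prod.fst hab.symm)
        · by_cases e2b : b = (qi, qj)
          · rw [e2a, e2b]
          · exfalso
            subst e2a
            rw [hφq, hφo b e1b e2b] at hab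
            apply h2
            rw [hab]
            exact hb
      · by_cases e1b : b = (pi, pj)
        · exfalso
          subst e1b
          rw [hφp, hφo a e1a e2a] at hab
          apply h1
          rw [← hab]
          exact ha
        · by_cases e2b : b = (qi, qj)
          · exfalso
            subst e2b
            rw [hφq, hφo a e1a e2a] at hab
            apply h2
            rw [← hab]
            exact ha
          · rw [hφo a e1a e2a, hφo b e1b e2b] at hab
            exact hab
  set F'' := F.image φ with hF''
  have hrowF'' : ∀ i, rowSum F'' i = rowSum F i := by
    intro i
    unfold rowSum
    rw [hF'', Finset.filter_image]
    rw [Finset.card_image_of_injOn (Set.InjOn.mono (fun z hz => Finset.mem_coe.mpr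
      (Finset.filter_subset _ _ (Finset.mem_coe.mp hz))) hφinjF)]
    congr 2
    apply Finset.filter_congr
    intro z _
    rw [hφ1 z]
  have hcolF'' : ∀ j, colSum F'' j = colSum F j := by
    intro j
    unfold colSum
    rw [hF'', Finset.filter_image]
    rw [Finset.card_image_of_injOn (Set.InjOn.mono (fun z hz => Finset.mem_coe.mpr
      (Finset.filter_subset _ _ (Finset.mem_coe.mp hz))) hφinjF)]
    have step1 : F.filter (fun z => (φ z).2 = j) = F.filter (fun z => (τ z).2 = j) := by
      apply Finset.filter_congr
      intro z _
      rw [hφ2 z]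
    rw [step1]
    have step2 : (F.image τ).filter (fun z => z.2 = j)
        = (F.filter fun z => (τ z).2 = j).image τ := Finset.filter_image
    rw [hτim] at step2
    rw [step2, Finset.card_image_of_injective _ hτinj]
  have heq := hF F'' hrowF'' hcolF''
  have hmem : ((pi, qj) : ℤ × ℤ) ∈ F'' := by
    rw [hF'']
    apply Finset.mem_image.mpr
    exact ⟨(pi, pj), hp, hφp⟩
  rw [heq] at hmem
  exact h1 hmem

lemma noswitch_tp {F : Finset (ℤ × ℤ)} (h : noswitch F) : noswitch (tp F) := by
  intro p hp q hq
  have := h _ (mem_tp.mp hq) _ (mem_tp.mp hp)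
  rcases this with h' | h'
  · exact Or.inl (mem_tp.mpr h')
  · exact Or.inr (mem_tp.mpr h')

lemma cols_chain {F : Finset (ℤ × ℤ)} (h : noswitch F) (j j' : ℤ) :
    colset F j ⊆ colset F j' ∨ colset F j' ⊆ colset F j := by
  by_contra hcon
  push_neg at hcon
  obtain ⟨i, hi, hi'⟩ := Finset.not_subset.mp hcon.1
  obtain ⟨i', hi'2, hi'3⟩ := Finset.not_subset.mp hcon.2
  rw [mem_colset] at hi hi'2
  have := h _ hi _ hi'2
  simp only at this
  rcases this with h' | h'
  · exact hi' (mem_colset.mpr h')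
  · exact hi'3 (mem_colset.mpr h')

/-- number of columns with column sum at least `t` -/
def ntZ (F : Finset (ℤ × ℤ)) (t : ℤ) : ℕ :=
  ((F.image Prod.snd).filter fun j => t ≤ colSum F j).card

/-- number of rows with row sum at least `t` -/
def mtZ (F : Finset (ℤ × ℤ)) (t : ℤ) : ℕ := ntZ (tp F) t

lemma mtZ_eq (F : Finset (ℤ × ℤ)) (t : ℤ) :
    mtZ F t = ((F.image Prod.fst).filter fun i => t ≤ rowSum F i).card := by
  unfold mtZ ntZ
  rw [image_snd_tp]
  congr 1
  apply Finset.filter_congr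
  intro i _
  rw [colSum_tp]

lemma chain_count {F : Finset (ℤ × ℤ)} (h : noswitch F) (t k : ℤ) (ht : 1 ≤ t) (hk : 1 ≤ k)
    (hle : k ≤ (ntZ F t : ℤ)) : t ≤ (mtZ F k : ℤ) := by
  set J := (F.image Prod.snd).filter (fun j => t ≤ colSum F j) with hJ
  have hJcard : ntZ F t = J.card := rfl
  rw [hJcard] at hle
  have hJne : J.Nonempty := by
    rw [← Finset.card_pos]
    omega
  obtain ⟨j0, hj0, hmin⟩ := Finset.exists_min_image J (fun j => (colset F j).card) hJne
  have hsub : ∀ j ∈ J, colset F j0 ⊆ colset F j := by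
    intro j hj
    rcases cols_chain h j0 j with hc | hc
    · exact hc
    · have := hmin j hj
      have heq := Finset.eq_of_subset_of_card_le hc this
      rw [heq]
  have hrows : ∀ i ∈ colset F j0, (k : ℤ) ≤ colSum (tp F) i := by
    intro i hi
    have hJsub : J ⊆ colset (tp F) i := by
      intro j hj
      rw [mem_colset, mem_tp]
      exact mem_colset.mp (hsub j hj hi)
    have hc := Finset.card_le_card hJsub
    have := card_colset (tp F) i
    omega
  have hsub2 : colset F j0 ⊆ ((tp F).image Prod.snd).filter (fun i => k ≤ colSum (tp F) i) := by
    intro i hi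
    rw [Finset.mem_filter]
    refine ⟨?_, hrows i hi⟩
    rw [image_snd_tp]
    exact Finset.mem_image.mpr ⟨(i, j0), mem_colset.mp hi, rfl⟩
  have hcard := Finset.card_le_card hsub2
  have hj0' : t ≤ colSum F j0 := (Finset.mem_filter.mp hj0).2
  have hcc := card_colset F j0
  have hm : mtZ F k = (((tp F).image Prod.snd).filter (fun i => k ≤ colSum (tp F) i)).card := rfl
  omega

lemma conj_count {F : Finset (ℤ × ℤ)} (h : noswitch F) (t k : ℤ) (ht : 1 ≤ t) (hk : 1 ≤ k) :
    k ≤ (ntZ F t : ℤ) ↔ t ≤ (mtZ F k : ℤ) := by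
  constructor
  · exact chain_count h t k ht hk
  · intro hle
    have h2 := chain_count (noswitch_tp h) k t hk ht hle
    have : mtZ (tp F) t = ntZ F t := by unfold mtZ; rw [tp_tp]
    rw [this] at h2
    exact h2

/-- the sorted column diagram -/
noncomputable def SC (F : Finset (ℤ × ℤ)) : Finset (ℤ × ℤ) :=
  ((Dc F).image Prod.snd).biUnion
    (fun t => (Finset.Icc (1:ℤ) (ntZ F t : ℤ)) ×ˢ ({t} : Finset ℤ))

lemma mem_SC {F : Finset (ℤ × ℤ)} {p : ℤ × ℤ} :
    p ∈ SC F ↔ 1 ≤ p.2 ∧ 1 ≤ p.1 ∧ p.1 ≤ (ntZ F p.2 : ℤ) := by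
  unfold SC
  rw [Finset.mem_biUnion]
  constructor
  · rintro ⟨t, ht, hp⟩
    rw [Finset.mem_product, Finset.mem_singleton, Finset.mem_Icc] at hp
    obtain ⟨⟨h1, h2⟩, h3⟩ := hp
    subst h3
    obtain ⟨q, hq, hq2⟩ := Finset.mem_image.mp ht
    have hq3 := (mem_Dc.mp hq).1
    rw [hq2] at hq3
    exact ⟨hq3, h1, h2⟩
  · rintro ⟨h1, h2, h3⟩
    refine ⟨p.2, ?_, ?_⟩
    · have hpos : 0 < ntZ F p.2 := by
        rcases Nat.eq_zero_or_pos (ntZ F p.2) with h | h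
        · exfalso; rw [h] at h3; push_cast at h3; omega
        · exact h
      unfold ntZ at hpos
      obtain ⟨j, hj⟩ := Finset.card_pos.mp hpos
      rw [Finset.mem_filter] at hj
      exact Finset.mem_image.mpr ⟨(j, p.2), mem_Dc.mpr ⟨h1, hj.2⟩, rfl⟩
    · rw [Finset.mem_product, Finset.mem_singleton, Finset.mem_Icc]
      exact ⟨⟨h2, h3⟩, rfl⟩

noncomputable def SR (F : Finset (ℤ × ℤ)) : Finset (ℤ × ℤ) := SC (tp F)

lemma mem_SR {F : Finset (ℤ × ℤ)} {p : ℤ × ℤ} :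
    p ∈ SR F ↔ 1 ≤ p.2 ∧ 1 ≤ p.1 ∧ p.1 ≤ (mtZ F p.2 : ℤ) := mem_SC

lemma tp_SR {F : Finset (ℤ × ℤ)} (h : noswitch F) : tp (SR F) = SC F := by
  ext p
  rw [mem_tp, mem_SR, mem_SC]
  constructor
  · rintro ⟨h1, h2, h3⟩
    exact ⟨h2, h1, (conj_count h p.2 p.1 h2 h1).mpr h3⟩
  · rintro ⟨h1, h2, h3⟩
    exact ⟨h2, h1, (conj_count h p.2 p.1 h1 h2).mp h3⟩

-- SECTION 7: fiber machinery
lemma sd_product_right (t : ℤ) (A B : Finset ℤ) :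
    sd (A ×ˢ ({t} : Finset ℤ)) (B ×ˢ ({t} : Finset ℤ)) = (sd A B) ×ˢ ({t} : Finset ℤ) := by
  ext p
  simp only [mem_sd, Finset.mem_product, Finset.mem_singleton]
  tauto

lemma fib_Dc_eq {F : Finset (ℤ × ℤ)} {t : ℤ} (ht : 1 ≤ t) :
    (Dc F).filter (fun p => p.2 = t)
      = ((F.image Prod.snd).filter (fun j => t ≤ colSum F j)).image (fun j => (j, t)) := by
  ext ⟨x, s⟩
  rw [Finset.mem_filter, mem_Dc, Finset.mem_image]
  constructor
  · rintro ⟨⟨h1, h2⟩, h3⟩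
    simp only at h3
    subst h3
    refine ⟨x, Finset.mem_filter.mpr ⟨?_, h2⟩, rfl⟩
    obtain ⟨i, hi⟩ := colSum_pos_iff.mp (le_trans h1 h2)
    exact Finset.mem_image.mpr ⟨(i, x), hi, rfl⟩
  · rintro ⟨j, hj, hje⟩
    rw [Finset.mem_filter] at hj
    obtain ⟨he1, he2⟩ := Prod.ext_iff.mp hje
    simp only at he1 he2 ⊢
    subst he1; subst he2
    exact ⟨⟨ht, hj.2⟩, rfl⟩

lemma fib_Dc_card {F : Finset (ℤ × ℤ)} {t : ℤ} (ht : 1 ≤ t) :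
    ((Dc F).filter (fun p => p.2 = t)).card = ntZ F t := by
  rw [fib_Dc_eq ht, Finset.card_image_of_injective]
  · rfl
  · intro a b h
    exact (Prod.ext_iff.mp h).1

lemma fib_Dc_zero {F : Finset (ℤ × ℤ)} {t : ℤ} (ht : t < 1) :
    (Dc F).filter (fun p => p.2 = t) = ∅ := by
  rw [Finset.eq_empty_iff_forall_notMem]
  intro p hp
  rw [Finset.mem_filter, mem_Dc] at hp
  omega

lemma fib_SC_eq {F : Finset (ℤ × ℤ)} {t : ℤ} (ht : 1 ≤ t) :
    (SC F).filter (fun p => p.2 = t) = (Finset.Icc (1:ℤ) (ntZ F t : ℤ)) ×ˢ ({t} : Finset ℤ) := by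
  ext ⟨x, s⟩
  rw [Finset.mem_filter, mem_SC, Finset.mem_product, Finset.mem_singleton, Finset.mem_Icc]
  simp only
  constructor
  · rintro ⟨⟨h1, h2, h3⟩, rfl⟩
    exact ⟨⟨h2, h3⟩, rfl⟩
  · rintro ⟨⟨h1, h2⟩, rfl⟩
    exact ⟨⟨ht, h1, h2⟩, rfl⟩

lemma fib_SC_zero {F : Finset (ℤ × ℤ)} {t : ℤ} (ht : t < 1) :
    (SC F).filter (fun p => p.2 = t) = ∅ := by
  rw [Finset.eq_empty_iff_forall_notMem]
  intro p hp
  rw [Finset.mem_filter, mem_SC] at hp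
  omega

lemma fib_SC_card (F : Finset (ℤ × ℤ)) (t : ℤ) :
    ((SC F).filter (fun p => p.2 = t)).card = ((Dc F).filter (fun p => p.2 = t)).card := by
  rcases le_or_gt 1 t with ht | ht
  · rw [fib_SC_eq ht, fib_Dc_card ht, Finset.card_product, Finset.card_singleton, mul_one,
      Int.card_Icc]
    omega
  · rw [fib_SC_zero ht, fib_Dc_zero ht]

/-- the key rearrangement inequality, fiberwise -/
lemma card_sd_mono_fibers (X S2 Y : Finset (ℤ × ℤ))
    (hcards : ∀ t, (X.filter (fun p => p.2 = t)).card = (S2.filter (fun p => p.2 = t)).card)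
    (hS2 : ∀ t, 1 ≤ t → ∃ b : ℤ, 0 ≤ b ∧
      S2.filter (fun p => p.2 = t) = (Finset.Icc (1:ℤ) b) ×ˢ ({t} : Finset ℤ))
    (hY : ∀ t, 1 ≤ t → ∃ b : ℤ, 0 ≤ b ∧
      Y.filter (fun p => p.2 = t) = (Finset.Icc (1:ℤ) b) ×ˢ ({t} : Finset ℤ))
    (hS2z : ∀ t, t < 1 → S2.filter (fun p => p.2 = t) = ∅)
    (hYz : ∀ t, t < 1 → Y.filter (fun p => p.2 = t) = ∅) :
    (sd S2 Y).card ≤ (sd X Y).card := by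
  classical
  set T := ((X ∪ S2) ∪ Y).image Prod.snd with hT
  have hcov1 : ∀ p ∈ sd S2 Y, p.2 ∈ T := by
    intro p hp
    rw [mem_sd] at hp
    rw [hT]
    apply Finset.mem_image.mpr
    rcases hp with ⟨h, _⟩ | ⟨h, _⟩
    · exact ⟨p, Finset.mem_union_left _ (Finset.mem_union_right _ h), rfl⟩
    · exact ⟨p, Finset.mem_union_right _ h, rfl⟩
  have hcov2 : ∀ p ∈ sd X Y, p.2 ∈ T := by
    intro p hp
    rw [mem_sd] at hp
    rw [hT]
    apply Finset.mem_image.mpr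
    rcases hp with ⟨h, _⟩ | ⟨h, _⟩
    · exact ⟨p, Finset.mem_union_left _ (Finset.mem_union_left _ h), rfl⟩
    · exact ⟨p, Finset.mem_union_right _ h, rfl⟩
  rw [Finset.card_eq_sum_card_fiberwise hcov1, Finset.card_eq_sum_card_fiberwise hcov2]
  apply Finset.sum_le_sum
  intro t _
  rw [filter_sd, filter_sd]
  rcases le_or_gt 1 t with ht | ht
  · obtain ⟨b, hb0, hbe⟩ := hS2 t ht
    obtain ⟨b', hb'0, hb'e⟩ := hY t ht
    have hL : ((sd (S2.filter (fun p => p.2 = t)) (Y.filter (fun p => p.2 = t))).card : ℤ)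
        = |b - b'| := by
      rw [hbe, hb'e, sd_product_right, Finset.card_product, Finset.card_singleton, mul_one]
      exact card_sd_Icc b b' hb0 hb'0
    have hXcard : ((X.filter (fun p => p.2 = t)).card : ℤ) = b := by
      rw [hcards t, hbe, Finset.card_product, Finset.card_singleton, mul_one, Int.card_Icc]
      omega
    have hYcard : ((Y.filter (fun p => p.2 = t)).card : ℤ) = b' := by
      rw [hb'e, Finset.card_product, Finset.card_singleton, mul_one, Int.card_Icc]
      omega
    have hR := abs_card_sub_le_card_sd (X.filter (fun p => p.2 = t)) (Y.filter (fun p => p.2 = t))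
    rw [hXcard, hYcard] at hR
    have : ((sd (S2.filter (fun p => p.2 = t)) (Y.filter (fun p => p.2 = t))).card : ℤ)
        ≤ ((sd (X.filter (fun p => p.2 = t)) (Y.filter (fun p => p.2 = t))).card : ℤ) := by
      rw [hL]; exact hR
    exact_mod_cast this
  · rw [hS2z t ht, hYz t ht]
    simp [sd]

-- SECTION 8: sortedness infrastructure
lemma ntZ_antitone (F : Finset (ℤ × ℤ)) {s s' : ℤ} (h : s' ≤ s) : ntZ F s ≤ ntZ F s' := by
  unfold ntZ
  apply Finset.card_le_card
  intro j hj
  rw [Finset.mem_filter] at hj ⊢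
  exact ⟨hj.1, by omega⟩

lemma sorted_count (H : Finset (ℤ × ℤ)) (N : ℕ) (g : ℕ → ℤ)
    (hg_eq : ∀ j : ℕ, 1 ≤ j → j ≤ N → colSum H (j : ℤ) = g j)
    (hg_zero : ∀ j : ℤ, j < 1 ∨ (N : ℤ) < j → colSum H j = 0)
    (hg_mono : ∀ j j' : ℕ, 1 ≤ j → j ≤ j' → j' ≤ N → g j' ≤ g j)
    (t : ℤ) (ht : 1 ≤ t) (j : ℤ) :
    t ≤ colSum H j ↔ 1 ≤ j ∧ j ≤ (ntZ H t : ℤ) := by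
  set S := (H.image Prod.snd).filter (fun j => t ≤ colSum H j) with hS
  have hcard : ntZ H t = S.card := rfl
  have hmemS : ∀ x : ℤ, x ∈ S ↔ t ≤ colSum H x := by
    intro x
    rw [hS, Finset.mem_filter]
    constructor
    · exact fun h => h.2
    · intro h
      refine ⟨?_, h⟩
      obtain ⟨i, hi⟩ := colSum_pos_iff.mp (le_trans ht h)
      exact Finset.mem_image.mpr ⟨(i, x), hi, rfl⟩
  have hbound : ∀ x : ℤ, t ≤ colSum H x → 1 ≤ x ∧ x ≤ (N : ℤ) := by
    intro x hx
    by_contra hc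
    push_neg at hc
    have : x < 1 ∨ (N : ℤ) < x := by
      rcases le_or_gt 1 x with h | h
      · exact Or.inr (hc h)
      · exact Or.inl h
    rw [hg_zero x this] at hx
    omega
  have hIcc : S = Finset.Icc 1 (S.card : ℤ) := by
    apply downclosed_eq_Icc
    · intro x hx
      exact (hbound x ((hmemS x).mp hx)).1
    · intro x hx y hy1 hy2
      rw [hmemS] at hx ⊢
      obtain ⟨hx1, hx2⟩ := hbound x hx
      have hyN : y ≤ (N : ℤ) := le_trans hy2 hx2
      have ey : ((y.toNat : ℕ) : ℤ) = y := Int.toNat_of_nonneg (by omega)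
      have ex : ((x.toNat : ℕ) : ℤ) = x := Int.toNat_of_nonneg (by omega)
      have hey := hg_eq y.toNat (by omega) (by omega)
      have hex := hg_eq x.toNat (by omega) (by omega)
      rw [ey] at hey
      rw [ex] at hex
      have := hg_mono y.toNat x.toNat (by omega) (by omega) (by omega)
      omega
  constructor
  · intro h
    have : j ∈ S := (hmemS j).mpr h
    rw [hIcc, Finset.mem_Icc] at this
    omega
  · intro h
    have : j ∈ S := by
      rw [hIcc, Finset.mem_Icc]
      omega
    exact (hmemS j).mp this

lemma fib_Dc_Icc {H : Finset (ℤ × ℤ)} {t : ℤ} (ht : 1 ≤ t)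
    (hs : ∀ j : ℤ, t ≤ colSum H j ↔ 1 ≤ j ∧ j ≤ (ntZ H t : ℤ)) :
    (Dc H).filter (fun p => p.2 = t) = (Finset.Icc (1:ℤ) (ntZ H t : ℤ)) ×ˢ ({t} : Finset ℤ) := by
  ext ⟨x, s⟩
  rw [Finset.mem_filter, mem_Dc, Finset.mem_product, Finset.mem_singleton, Finset.mem_Icc]
  simp only
  constructor
  · rintro ⟨⟨h1, h2⟩, rfl⟩
    exact ⟨(hs x).mp h2, rfl⟩
  · rintro ⟨hx, rfl⟩
    exact ⟨⟨ht, (hs x).mpr hx⟩, rfl⟩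

lemma IsStair_of_sorted {H : Finset (ℤ × ℤ)}
    (hs : ∀ t : ℤ, 1 ≤ t → ∀ j : ℤ, t ≤ colSum H j ↔ 1 ≤ j ∧ j ≤ (ntZ H t : ℤ)) :
    IsStair (Dc H) := by
  constructor
  · intro p hp
    have h := mem_Dc.mp hp
    exact ⟨((hs p.2 h.1 p.1).mp h.2).1, h.1⟩
  · intro p hp i j h1 h2 h3 h4
    have h := mem_Dc.mp hp
    rw [mem_Dc]
    refine ⟨h3, ?_⟩
    simp only
    rw [hs j h3 i]
    have hp1 := (hs p.2 h.1 p.1).mp h.2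
    have hmono : ntZ H p.2 ≤ ntZ H j := ntZ_antitone H h4
    constructor
    · exact h1
    · omega

lemma rowSum_le_of_col_zero {H : Finset (ℤ × ℤ)} {N : ℕ}
    (hz : ∀ j : ℤ, j < 1 ∨ (N : ℤ) < j → colSum H j = 0) (i : ℤ) :
    rowSum H i ≤ (N : ℤ) := by
  unfold rowSum
  have hsub : H.filter (fun p => p.1 = i) ⊆ ({i} : Finset ℤ) ×ˢ Finset.Icc (1:ℤ) (N : ℤ) := by
    intro p hp
    rw [Finset.mem_filter] at hp
    rw [Finset.mem_product, Finset.mem_singleton, Finset.mem_Icc]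
    refine ⟨hp.2, ?_, ?_⟩
    · by_contra hc
      push_neg at hc
      have := hz p.2 (Or.inl (by omega))
      have : (1:ℤ) ≤ colSum H p.2 := colSum_pos_iff.mpr ⟨p.1, by rw [show (p.1, p.2) = p by rfl]; exact hp.1⟩
      omega
    · by_contra hc
      push_neg at hc
      have := hz p.2 (Or.inr (by omega))
      have : (1:ℤ) ≤ colSum H p.2 := colSum_pos_iff.mpr ⟨p.1, by rw [show (p.1, p.2) = p by rfl]; exact hp.1⟩
      omega
  have := Finset.card_le_card hsub
  rw [Finset.card_product, Finset.card_singleton, one_mul, Int.card_Icc] at this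
  omega

/-- rows of a noswitch set with monotone column sums are initial intervals -/
lemma rows_intervals {F : Finset (ℤ × ℤ)} (hns : noswitch F)
    (hcm : ∀ j j' : ℤ, 1 ≤ j → j ≤ j' → colSum F j' ≤ colSum F j) :
    ∀ i j j' : ℤ, (i, j) ∈ F → 1 ≤ j' → j' ≤ j → (i, j') ∈ F := by
  intro i j j' hij h1 h2
  by_contra hno
  have hcards : colSum F j ≤ colSum F j' := hcm j' j h1 h2
  have hi : i ∈ colset F j := mem_colset.mpr hij
  have hi' : i ∉ colset F j' := fun h => hno (mem_colset.mp h)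
  have hnsub : ¬ (colset F j' ⊆ colset F j) := by
    intro hsub
    have hle : (colset F j).card ≤ (colset F j').card := by
      have e1 := card_colset F j
      have e2 := card_colset F j'
      omega
    have := Finset.eq_of_subset_of_card_le hsub hle
    rw [← this] at hi
    exact hi' hi
  obtain ⟨i'', hi''1, hi''2⟩ := Finset.not_subset.mp hnsub
  rw [mem_colset] at hi''1
  have := hns _ hij _ hi''1
  simp only at this
  rcases this with h | h
  · exact hno h
  · exact hi''2 (mem_colset.mpr h)

lemma stair_of_sorted_noswitch {F : Finset (ℤ × ℤ)} (hns : noswitch F)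
    (hrz : ∀ i : ℤ, i < 1 → rowSum F i = 0)
    (hcz : ∀ j : ℤ, j < 1 → colSum F j = 0)
    (hrm : ∀ i i' : ℤ, 1 ≤ i → i ≤ i' → rowSum F i' ≤ rowSum F i)
    (hcm : ∀ j j' : ℤ, 1 ≤ j → j ≤ j' → colSum F j' ≤ colSum F j) :
    IsStair F := by
  have hcoords : ∀ p ∈ F, 1 ≤ p.1 ∧ 1 ≤ p.2 := by
    intro p hp
    constructor
    · by_contra hc
      push_neg at hc
      have h0 := hrz p.1 (by omega)
      have : (1:ℤ) ≤ rowSum F p.1 := rowSum_pos_iff.mpr ⟨p.2, by rw [show (p.1, p.2) = p by rfl]; exact hp⟩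
      omega
    · by_contra hc
      push_neg at hc
      have h0 := hcz p.2 (by omega)
      have : (1:ℤ) ≤ colSum F p.2 := colSum_pos_iff.mpr ⟨p.1, by rw [show (p.1, p.2) = p by rfl]; exact hp⟩
      omega
  constructor
  · exact hcoords
  · intro p hp i j h1 h2 h3 h4
    have hrow := rows_intervals hns hcm
    have hcol := rows_intervals (noswitch_tp hns) (by
      intro a b ha hb
      rw [colSum_tp, colSum_tp]
      exact hrm a b ha hb)
    have step1 : (p.1, j) ∈ F := hrow p.1 p.2 j (by rw [show (p.1, p.2) = p by rfl]; exact hp) h3 h4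
    have step2 : (j, p.1) ∈ tp F := mem_tp.mpr step1
    have step3 : (j, i) ∈ tp F := hcol j p.1 i step2 h1 h2
    exact mem_tp.mp step3

-- SECTION 9: translation lemma
lemma main_transl (F2 F1 : Finset (ℤ × ℤ)) (n : ℕ) (c v : ℕ → ℤ) (a : ℕ → ℕ)
    (hc_eq : ∀ j : ℕ, 1 ≤ j → j ≤ n → colSum F2 (j : ℤ) = c j)
    (hc_zero : ∀ j : ℤ, j < 1 ∨ (n : ℤ) < j → colSum F2 j = 0)
    (ha' : ∀ jn : ℕ, 1 ≤ jn → (a jn : ℤ) = (mtZ F2 (jn : ℤ) : ℤ))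
    (hsR : ∀ w : ℤ, 1 ≤ w → ∀ i : ℤ, w ≤ rowSum F2 i ↔ 1 ≤ i ∧ i ≤ (mtZ F2 w : ℤ))
    (hstair : IsStair F1)
    (hv_eq : ∀ j : ℕ, 1 ≤ j → colSum F1 (j : ℤ) = v j) :
    ((tp (Dr F2) ∩ Dc F2 ⊆ tp F1) ∧ (tp F1 ⊆ tp (Dr F2) ∪ Dc F2))
      ↔ (∀ j : ℕ, 1 ≤ j →
          ((j ≤ n → min ((a j : ℤ)) (c j) ≤ v j ∧ v j ≤ max ((a j : ℤ)) (c j)) ∧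
           (n < j → v j = 0))) := by
  have memA : ∀ j t : ℤ, ((j, t) ∈ tp (Dr F2)) ↔ (1 ≤ j ∧ j ≤ rowSum F2 t) := by
    intro j t
    rw [mem_tp]
    exact mem_Dr
  have memC : ∀ j t : ℤ, ((j, t) ∈ Dc F2) ↔ (1 ≤ t ∧ t ≤ colSum F2 j) := fun j t => mem_Dc
  have memS : ∀ j t : ℤ, ((j, t) ∈ tp F1) ↔ (1 ≤ j ∧ 1 ≤ t ∧ t ≤ colSum F1 j) := by
    intro j t
    rw [mem_tp]
    exact stair_mem_iff_col hstair t j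
  have hvnn : ∀ jn : ℕ, 1 ≤ jn → 0 ≤ v jn := by
    intro jn h
    rw [← hv_eq jn h]
    exact colSum_nonneg F1 _
  have hrowle : ∀ t : ℤ, rowSum F2 t ≤ (n : ℤ) := rowSum_le_of_col_zero hc_zero
  constructor
  · rintro ⟨hAC, hSU⟩ jn h1jn
    have h1j : (1 : ℤ) ≤ (jn : ℤ) := by exact_mod_cast h1jn
    have hv' : colSum F1 (jn : ℤ) = v jn := hv_eq jn h1jn
    constructor
    · intro hjn
      have hc' : colSum F2 (jn : ℤ) = c jn := hc_eq jn h1jn hjn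
      have ha'' := ha' jn h1jn
      constructor
      · rcases le_or_gt (min ((a jn : ℤ)) (c jn)) 0 with hmu | hmu
        · have := hvnn jn h1jn
          omega
        · set μ := min ((a jn : ℤ)) (c jn) with hμ
          have hmem : ((jn : ℤ), μ) ∈ tp (Dr F2) ∩ Dc F2 := by
            rw [Finset.mem_inter, memA, memC]
            refine ⟨⟨h1j, ?_⟩, by omega, by omega⟩
            rw [hsR (jn : ℤ) h1j μ]
            omega
          have := hAC hmem
          rw [memS] at this
          omega
      · rcases le_or_gt (v jn) 0 with hv0 | hv0
        · have : (0 : ℤ) ≤ (a jn : ℤ) := Int.natCast_nonneg _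
          omega
        · have hmem : ((jn : ℤ), v jn) ∈ tp F1 := by
            rw [memS]
            exact ⟨h1j, by omega, by omega⟩
          have := hSU hmem
          rw [Finset.mem_union, memA, memC] at this
          rcases this with ⟨_, h⟩ | ⟨_, h⟩
          · rw [hsR (jn : ℤ) h1j (v jn)] at h
            have ha'' := ha' jn h1jn
            omega
          · omega
    · intro hjn
      have hnj : (n : ℤ) < (jn : ℤ) := by exact_mod_cast hjn
      have hv0 := hvnn jn h1jn
      by_contra hne
      have hv1 : 1 ≤ v jn := by omega
      have hmem : ((jn : ℤ), 1) ∈ tp F1 := by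
        rw [memS]
        exact ⟨h1j, le_rfl, by omega⟩
      have := hSU hmem
      rw [Finset.mem_union, memA, memC] at this
      rcases this with ⟨_, h⟩ | ⟨_, h⟩
      · have := hrowle 1
        omega
      · have := hc_zero (jn : ℤ) (Or.inr hnj)
        omega
  · intro hprop
    constructor
    · rintro ⟨j, t⟩ hp
      rw [Finset.mem_inter, memA, memC] at hp
      obtain ⟨⟨h1j, hjr⟩, h1t, htc⟩ := hp
      have hjn : 1 ≤ j ∧ j ≤ (n : ℤ) := by
        by_contra hcon
        push_neg at hcon
        have : j < 1 ∨ (n : ℤ) < j := by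
          rcases le_or_gt 1 j with h | h
          · exact Or.inr (hcon h)
          · exact Or.inl h
        have := hc_zero j this
        omega
      set jn := j.toNat with hjndef
      have hcast : ((jn : ℕ) : ℤ) = j := Int.toNat_of_nonneg (by omega)
      have h1jn : 1 ≤ jn := by omega
      have hjnn : jn ≤ n := by omega
      have hc' : colSum F2 j = c jn := by rw [← hcast]; exact hc_eq jn h1jn hjnn
      have hv' : colSum F1 j = v jn := by rw [← hcast]; exact hv_eq jn h1jn
      have ha'' : (a jn : ℤ) = (mtZ F2 j : ℤ) := by rw [← hcast]; exact ha' jn h1jn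
      have htm : t ≤ (mtZ F2 j : ℤ) := by
        have := (hsR j h1j t).mp hjr
        omega
      have hmin := (hprop jn h1jn).1 hjnn
      rw [memS]
      refine ⟨h1j, h1t, ?_⟩
      omega
    · rintro ⟨j, t⟩ hp
      rw [memS] at hp
      obtain ⟨h1j, h1t, htv⟩ := hp
      set jn := j.toNat with hjndef
      have hcast : ((jn : ℕ) : ℤ) = j := Int.toNat_of_nonneg (by omega)
      have h1jn : 1 ≤ jn := by omega
      have hv' : colSum F1 j = v jn := by rw [← hcast]; exact hv_eq jn h1jn
      rcases le_or_gt jn n with hjnn | hjnn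
      · have hc' : colSum F2 j = c jn := by rw [← hcast]; exact hc_eq jn h1jn hjnn
        have ha'' : (a jn : ℤ) = (mtZ F2 j : ℤ) := by rw [← hcast]; exact ha' jn h1jn
        have hminmax := (hprop jn h1jn).1 hjnn
        rcases le_or_gt t (c jn) with htc | htc
        · apply Finset.mem_union_right
          rw [memC]
          omega
        · apply Finset.mem_union_left
          rw [memA]
          refine ⟨h1j, ?_⟩
          rw [hsR j h1j t]
          omega
      · exfalso
        have := (hprop jn h1jn).2 hjnn
        omega

-- SECTION 10: counting cast lemma + main theorem
lemma count_cast (H : Finset (ℤ × ℤ)) (N : ℕ) (g : ℕ → ℤ) (w : ℕ) (hw : 1 ≤ w)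
    (hg_eq : ∀ j : ℕ, 1 ≤ j → j ≤ N → colSum H (j : ℤ) = g j)
    (hg_zero : ∀ j : ℤ, j < 1 ∨ (N : ℤ) < j → colSum H j = 0) :
    ((Finset.Icc 1 N).filter fun j => (w : ℤ) ≤ g j).card = ntZ H (w : ℤ) := by
  unfold ntZ
  apply Finset.card_bij (fun (j : ℕ) _ => (j : ℤ))
  · intro j hj
    rw [Finset.mem_filter, Finset.mem_Icc] at hj
    obtain ⟨⟨hj1, hj2⟩, hjg⟩ := hj
    have hcs : colSum H (j : ℤ) = g j := hg_eq j hj1 hj2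
    rw [Finset.mem_filter]
    constructor
    · have : (1 : ℤ) ≤ colSum H (j : ℤ) := by
        have : (1 : ℤ) ≤ (w : ℤ) := by exact_mod_cast hw
        omega
      obtain ⟨i, hi⟩ := colSum_pos_iff.mp this
      exact Finset.mem_image.mpr ⟨(i, (j : ℤ)), hi, rfl⟩
    · omega
  · intro a ha b hb hab
    exact_mod_cast hab
  · intro x hx
    rw [Finset.mem_filter] at hx
    obtain ⟨hx1, hx2⟩ := hx
    have hb : 1 ≤ x ∧ x ≤ (N : ℤ) := by
      by_contra hc
      push_neg at hc
      have : x < 1 ∨ (N : ℤ) < x := by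
        rcases le_or_gt 1 x with h | h
        · exact Or.inr (hc h)
        · exact Or.inl h
      have h0 := hg_zero x this
      have : (1 : ℤ) ≤ (w : ℤ) := by exact_mod_cast hw
      omega
    refine ⟨x.toNat, ?_, ?_⟩
    · have hcast : ((x.toNat : ℕ) : ℤ) = x := Int.toNat_of_nonneg (by omega)
      rw [Finset.mem_filter, Finset.mem_Icc]
      have hcs : colSum H ((x.toNat : ℕ) : ℤ) = g x.toNat := hg_eq x.toNat (by omega) (by omega)
      rw [hcast] at hcs
      refine ⟨⟨by omega, by omega⟩, by omega⟩
    · exact Int.toNat_of_nonneg (by omega)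


end Aux

set_option maxHeartbeats 2000000 in
/-- Characterisation of the uniquely determined sets `F1` minimising `α(F2, F1)`,
in terms of the (ordered) line sums of `F2`. -/
theorem closest_unique_sets (F2 F1 : Finset (ℤ × ℤ)) (m n : ℕ) (r c u v : ℕ → ℤ)
    -- `F2` has non-zero row sums `r_1 ≥ … ≥ r_m` in rows `1, …, m`, zero elsewhere
    (hr_eq : ∀ i : ℕ, 1 ≤ i → i ≤ m → rowSum F2 (i : ℤ) = r i)
    (hr_zero : ∀ i : ℤ, i < 1 ∨ (m : ℤ) < i → rowSum F2 i = 0)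
    (hr_pos : ∀ i : ℕ, 1 ≤ i → i ≤ m → 0 < r i)
    (hr_mono : ∀ i i' : ℕ, 1 ≤ i → i ≤ i' → i' ≤ m → r i' ≤ r i)
    -- `F2` has non-zero column sums `c_1 ≥ … ≥ c_n` in columns `1, …, n`, zero elsewhere
    (hc_eq : ∀ j : ℕ, 1 ≤ j → j ≤ n → colSum F2 (j : ℤ) = c j)
    (hc_zero : ∀ j : ℤ, j < 1 ∨ (n : ℤ) < j → colSum F2 j = 0)
    (hc_pos : ∀ j : ℕ, 1 ≤ j → j ≤ n → 0 < c j)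
    (hc_mono : ∀ j j' : ℕ, 1 ≤ j → j ≤ j' → j' ≤ n → c j' ≤ c j)
    -- `a_j = #{i : r_i ≥ j}` and `b_i = #{j : c_j ≥ i}`
    (a b : ℕ → ℕ)
    (ha : ∀ j : ℕ, a j = ((Finset.Icc 1 m).filter fun i => (j : ℤ) ≤ r i).card)
    (hb : ∀ i : ℕ, b i = ((Finset.Icc 1 n).filter fun j => (i : ℤ) ≤ c j).card)
    -- `α_0` is the minimum of `α(F2, F)` over all uniquely determined `F`
    (α0 : ℝ)
    (hα0 : α0 = sInf {x : ℝ | ∃ F : Finset (ℤ × ℤ), uniquelyDetermined F ∧ alpha F2 F = x})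
    -- `F1` is uniquely determined with row sums `u_1 ≥ u_2 ≥ …` in rows `1, 2, …`
    -- (zero elsewhere) and column sums `v_1 ≥ v_2 ≥ …` in columns `1, 2, …` (zero elsewhere)
    (hF1 : uniquelyDetermined F1)
    (hu_eq : ∀ i : ℕ, 1 ≤ i → rowSum F1 (i : ℤ) = u i)
    (hu_zero : ∀ i : ℤ, i < 1 → rowSum F1 i = 0)
    (hu_mono : ∀ i i' : ℕ, 1 ≤ i → i ≤ i' → u i' ≤ u i)
    (hv_eq : ∀ j : ℕ, 1 ≤ j → colSum F1 (j : ℤ) = v j)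
    (hv_zero : ∀ j : ℤ, j < 1 → colSum F1 j = 0)
    (hv_mono : ∀ j j' : ℕ, 1 ≤ j → j ≤ j' → v j' ≤ v j) :
    -- (i) ↔ (ii)
    ((alpha F2 F1 = α0) ↔
      (∀ j : ℕ, 1 ≤ j →
        (j ≤ n → min ((a j : ℤ)) (c j) ≤ v j ∧ v j ≤ max ((a j : ℤ)) (c j)) ∧
        (n < j → v j = 0))) ∧
    -- (i) ↔ (iii)
    ((alpha F2 F1 = α0) ↔
      (∀ i : ℕ, 1 ≤ i →
        (i ≤ m → min ((b i : ℤ)) (r i) ≤ u i ∧ u i ≤ max ((b i : ℤ)) (r i)) ∧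
        (m < i → u i = 0))) := by
  classical
  -- sorted characterizations for F2
  have sortedC : ∀ t : ℤ, 1 ≤ t → ∀ j : ℤ,
      t ≤ colSum F2 j ↔ 1 ≤ j ∧ j ≤ (ntZ F2 t : ℤ) :=
    fun t ht j => sorted_count F2 n c hc_eq hc_zero hc_mono t ht j
  have hr_eq' : ∀ i : ℕ, 1 ≤ i → i ≤ m → colSum (tp F2) (i : ℤ) = r i := by
    intro i h1 h2; rw [colSum_tp]; exact hr_eq i h1 h2
  have hr_zero' : ∀ i : ℤ, i < 1 ∨ (m : ℤ) < i → colSum (tp F2) i = 0 := by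
    intro i h; rw [colSum_tp]; exact hr_zero i h
  have sortedR : ∀ t : ℤ, 1 ≤ t → ∀ i : ℤ,
      t ≤ colSum (tp F2) i ↔ 1 ≤ i ∧ i ≤ (ntZ (tp F2) t : ℤ) :=
    fun t ht i => sorted_count (tp F2) m r hr_eq' hr_zero' hr_mono t ht i
  have hsR : ∀ w : ℤ, 1 ≤ w → ∀ i : ℤ, w ≤ rowSum F2 i ↔ 1 ≤ i ∧ i ≤ (mtZ F2 w : ℤ) := by
    intro w hw i
    rw [← colSum_tp]
    exact sortedR w hw i
  -- staircase structures
  have stairC : IsStair (Dc F2) := IsStair_of_sorted sortedC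
  have stairA : IsStair (tp (Dr F2)) := (IsStair_of_sorted sortedR).tp
  -- the lower bound for any uniquely determined set
  have lower : ∀ F : Finset (ℤ × ℤ), uniquelyDetermined F →
      (((sd (tp (Dr F2)) (Dc F2)).card : ℝ)) / 2 ≤ alpha F2 F := by
    intro F huF
    have hns := unique_noswitch huF
    have h1 : (sd (SC F) (Dc F2)).card ≤ (sd (Dc F) (Dc F2)).card := by
      apply card_sd_mono_fibers
      · intro t; exact (fib_SC_card F t).symm
      · intro t ht; exact ⟨(ntZ F t : ℤ), Int.natCast_nonneg _, fib_SC_eq ht⟩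
      · intro t ht; exact ⟨(ntZ F2 t : ℤ), Int.natCast_nonneg _, fib_Dc_Icc ht (sortedC t ht)⟩
      · intro t ht; exact fib_SC_zero ht
      · intro t ht; exact fib_Dc_zero ht
    have h2 : (sd (SC (tp F)) (Dc (tp F2))).card ≤ (sd (Dc (tp F)) (Dc (tp F2))).card := by
      apply card_sd_mono_fibers
      · intro t; exact (fib_SC_card (tp F) t).symm
      · intro t ht; exact ⟨(ntZ (tp F) t : ℤ), Int.natCast_nonneg _, fib_SC_eq ht⟩
      · intro t ht; exact ⟨(ntZ (tp F2) t : ℤ), Int.natCast_nonneg _, fib_Dc_Icc ht (sortedR t ht)⟩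
      · intro t ht; exact fib_SC_zero ht
      · intro t ht; exact fib_Dc_zero ht
    have h3 : (sd (tp (SR F)) (tp (Dr F2))).card = (sd (SR F) (Dr F2)).card :=
      card_sd_tp (SR F) (Dr F2)
    rw [tp_SR hns] at h3
    have h4 := sandwich_le (SC F) (tp (Dr F2)) (Dc F2)
    have h5 := lineDiff_eq F2 F
    have e1 : (sd (Dc F2) (Dc F)).card = (sd (Dc F) (Dc F2)).card := by rw [sd_comm]
    have e2 : (sd (Dr F2) (Dr F)).card = (sd (Dc (tp F)) (Dc (tp F2))).card := by
      rw [sd_comm]; rfl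
    have e3 : (sd (SR F) (Dr F2)).card = (sd (SC (tp F)) (Dc (tp F2))).card := rfl
    have key : ((sd (tp (Dr F2)) (Dc F2)).card : ℤ) ≤ lineDiff F2 F := by
      rw [h5]
      omega
    unfold alpha
    have : (((sd (tp (Dr F2)) (Dc F2)).card : ℝ)) ≤ ((lineDiff F2 F : ℤ) : ℝ) := by
      exact_mod_cast key
    linarith
  -- the minimum is attained at tp (A ∩ C)
  have stairFmin : IsStair (tp (tp (Dr F2) ∩ Dc F2)) := (stairA.inter stairC).tp
  have uniqueFmin : uniquelyDetermined (tp (tp (Dr F2) ∩ Dc F2)) :=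
    stair_unique _ _ rfl stairFmin
  have alphaFmin : alpha F2 (tp (tp (Dr F2) ∩ Dc F2))
      = ((sd (tp (Dr F2)) (Dc F2)).card : ℝ) / 2 := by
    have hDc : Dc (tp (tp (Dr F2) ∩ Dc F2)) = tp (Dr F2) ∩ Dc F2 := by
      rw [stair_Dc stairFmin, tp_tp]
    have hDr : Dr (tp (tp (Dr F2) ∩ Dc F2)) = tp (tp (Dr F2) ∩ Dc F2) :=
      stair_Dr stairFmin
    have h5 := lineDiff_eq F2 (tp (tp (Dr F2) ∩ Dc F2))
    rw [hDc, hDr] at h5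
    have e4 : (sd (Dr F2) (tp (tp (Dr F2) ∩ Dc F2))).card
        = (sd (tp (Dr F2)) (tp (Dr F2) ∩ Dc F2)).card := by
      rw [← card_sd_tp (Dr F2) (tp (tp (Dr F2) ∩ Dc F2)), tp_tp]
    have hsand : (sd (tp (Dr F2) ∩ Dc F2) (tp (Dr F2))).card
        + (sd (tp (Dr F2) ∩ Dc F2) (Dc F2)).card = (sd (tp (Dr F2)) (Dc F2)).card := by
      rw [sandwich_eq_iff]
      exact ⟨Finset.Subset.refl _, Finset.Subset.trans Finset.inter_subset_left
        (Finset.subset_union_left)⟩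
    have e5 : (sd (Dc F2) (tp (Dr F2) ∩ Dc F2)).card
        = (sd (tp (Dr F2) ∩ Dc F2) (Dc F2)).card := by rw [sd_comm]
    have e6 : (sd (tp (Dr F2)) (tp (Dr F2) ∩ Dc F2)).card
        = (sd (tp (Dr F2) ∩ Dc F2) (tp (Dr F2))).card := by rw [sd_comm]
    have hZ : lineDiff F2 (tp (tp (Dr F2) ∩ Dc F2))
        = ((sd (tp (Dr F2)) (Dc F2)).card : ℤ) := by
      rw [h5, e4, e5, e6]
      push_cast
      omega
    unfold alpha
    rw [hZ]
    push_cast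
    ring
  -- identify α0
  have hstar : α0 = ((sd (tp (Dr F2)) (Dc F2)).card : ℝ) / 2 := by
    rw [hα0]
    apply le_antisymm
    · apply csInf_le
      · refine ⟨((sd (tp (Dr F2)) (Dc F2)).card : ℝ) / 2, ?_⟩
        rintro x ⟨F, hF, rfl⟩
        exact lower F hF
      · exact ⟨tp (tp (Dr F2) ∩ Dc F2), uniqueFmin, alphaFmin⟩
    · apply le_csInf
      · exact ⟨_, tp (tp (Dr F2) ∩ Dc F2), uniqueFmin, alphaFmin⟩
      · rintro x ⟨F, hF, rfl⟩
        exact lower F hF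
  -- F1 is a staircase
  have hns1 := unique_noswitch hF1
  have hrm1 : ∀ i i' : ℤ, 1 ≤ i → i ≤ i' → rowSum F1 i' ≤ rowSum F1 i := by
    intro i i' h1 h2
    have e1 : ((i.toNat : ℕ) : ℤ) = i := Int.toNat_of_nonneg (by omega)
    have e2 : ((i'.toNat : ℕ) : ℤ) = i' := Int.toNat_of_nonneg (by omega)
    have hu1 := hu_eq i.toNat (by omega)
    have hu2 := hu_eq i'.toNat (by omega)
    rw [e1] at hu1
    rw [e2] at hu2
    have := hu_mono i.toNat i'.toNat (by omega) (by omega)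
    omega
  have hcm1 : ∀ j j' : ℤ, 1 ≤ j → j ≤ j' → colSum F1 j' ≤ colSum F1 j := by
    intro j j' h1 h2
    have e1 : ((j.toNat : ℕ) : ℤ) = j := Int.toNat_of_nonneg (by omega)
    have e2 : ((j'.toNat : ℕ) : ℤ) = j' := Int.toNat_of_nonneg (by omega)
    have hv1 := hv_eq j.toNat (by omega)
    have hv2 := hv_eq j'.toNat (by omega)
    rw [e1] at hv1
    rw [e2] at hv2
    have := hv_mono j.toNat j'.toNat (by omega) (by omega)
    omega
  have stairF1 : IsStair F1 := stair_of_sorted_noswitch hns1 hu_zero hv_zero hrm1 hcm1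
  -- express lineDiff F2 F1
  have hlineF1 : lineDiff F2 F1 = ((sd (tp F1) (tp (Dr F2))).card : ℤ)
      + ((sd (tp F1) (Dc F2)).card : ℤ) := by
    have h5 := lineDiff_eq F2 F1
    rw [stair_Dc stairF1, stair_Dr stairF1] at h5
    have e4 : (sd (Dr F2) F1).card = (sd (tp (Dr F2)) (tp F1)).card := by
      rw [card_sd_tp]
    have e5 : (sd (Dc F2) (tp F1)).card = (sd (tp F1) (Dc F2)).card := by rw [sd_comm]
    have e6 : (sd (tp (Dr F2)) (tp F1)).card = (sd (tp F1) (tp (Dr F2))).card := by rw [sd_comm]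
    rw [h5, e5, e4, e6]
    ring
  -- the master equivalence with containments
  have hiff0 : (alpha F2 F1 = α0)
      ↔ ((tp (Dr F2) ∩ Dc F2 ⊆ tp F1) ∧ (tp F1 ⊆ tp (Dr F2) ∪ Dc F2)) := by
    rw [hstar]
    unfold alpha
    rw [← sandwich_eq_iff]
    constructor
    · intro h
      have h' : ((lineDiff F2 F1 : ℤ) : ℝ) = ((sd (tp (Dr F2)) (Dc F2)).card : ℝ) := by
        linarith
      have h'' : lineDiff F2 F1 = ((sd (tp (Dr F2)) (Dc F2)).card : ℤ) := by
        exact_mod_cast h'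
      rw [hlineF1] at h''
      exact_mod_cast h''
    · intro h
      have h'' : lineDiff F2 F1 = ((sd (tp (Dr F2)) (Dc F2)).card : ℤ) := by
        rw [hlineF1]
        exact_mod_cast h
      rw [h'']
      push_cast
      ring
  -- cast identities for a and b
  have haj : ∀ jn : ℕ, 1 ≤ jn → (a jn : ℤ) = (mtZ F2 (jn : ℤ) : ℤ) := by
    intro jn h1
    rw [ha jn]
    have := count_cast (tp F2) m r jn h1 hr_eq' hr_zero'
    rw [this]
    rfl
  have hbj : ∀ jn : ℕ, 1 ≤ jn → (b jn : ℤ) = (mtZ (tp F2) (jn : ℤ) : ℤ) := by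
    intro jn h1
    rw [hb jn]
    have := count_cast F2 n c jn h1 hc_eq hc_zero
    rw [this]
    unfold mtZ
    rw [tp_tp]
  -- apply the translation lemma for (ii)
  have inst1 := main_transl F2 F1 n c v a hc_eq hc_zero haj hsR stairF1 hv_eq
  -- apply the translation lemma for (iii)
  have hsR2 : ∀ w : ℤ, 1 ≤ w → ∀ i : ℤ,
      w ≤ rowSum (tp F2) i ↔ 1 ≤ i ∧ i ≤ (mtZ (tp F2) w : ℤ) := by
    intro w hw i
    rw [rowSum_tp]
    have : (mtZ (tp F2) w : ℕ) = ntZ F2 w := by unfold mtZ; rw [tp_tp]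
    rw [this]
    exact sortedC w hw i
  have hu_eq' : ∀ i : ℕ, 1 ≤ i → colSum (tp F1) (i : ℤ) = u i := by
    intro i h; rw [colSum_tp]; exact hu_eq i h
  have inst2 := main_transl (tp F2) (tp F1) m r u b hr_eq' hr_zero' hbj hsR2 stairF1.tp hu_eq'
  -- convert inst2's containments
  have c1 : (tp (Dr F2) ∩ Dc F2 ⊆ tp F1) ↔ (tp (Dc F2) ∩ Dr F2 ⊆ F1) := by
    constructor
    · intro h x hx
      rw [Finset.mem_inter, mem_tp] at hx
      have hmem : (x.2, x.1) ∈ tp (Dr F2) ∩ Dc F2 := by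
        rw [Finset.mem_inter, mem_tp]
        exact ⟨hx.2, hx.1⟩
      have := h hmem
      rw [mem_tp] at this
      exact this
    · intro h x hx
      rw [Finset.mem_inter, mem_tp] at hx
      rw [mem_tp]
      apply h
      rw [Finset.mem_inter, mem_tp]
      exact ⟨hx.2, hx.1⟩
  have c2 : (tp F1 ⊆ tp (Dr F2) ∪ Dc F2) ↔ (F1 ⊆ tp (Dc F2) ∪ Dr F2) := by
    constructor
    · intro h x hx
      have hmem : (x.2, x.1) ∈ tp F1 := by
        rw [mem_tp]
        exact hx
      have := h hmem
      rw [Finset.mem_union, mem_tp] at this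
      rw [Finset.mem_union, mem_tp]
      tauto
    · intro h x hx
      rw [mem_tp] at hx
      have := h hx
      rw [Finset.mem_union, mem_tp] at this
      rw [Finset.mem_union, mem_tp]
      tauto
  have conv2 : ((tp (Dr (tp F2)) ∩ Dc (tp F2) ⊆ tp (tp F1))
      ∧ (tp (tp F1) ⊆ tp (Dr (tp F2)) ∪ Dc (tp F2)))
      ↔ ((tp (Dr F2) ∩ Dc F2 ⊆ tp F1) ∧ (tp F1 ⊆ tp (Dr F2) ∪ Dc F2)) := by
    have e1 : Dr (tp F2) = Dc F2 := by unfold Dr; rw [tp_tp]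
    have e2 : Dc (tp F2) = Dr F2 := rfl
    rw [e1, e2, tp_tp, c1, c2]
  constructor
  · rw [hiff0, inst1]
  · rw [hiff0, ← conv2, inst2]
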